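/- For the maximally entangled two-qubit state |φ⟩ = (|00⟩ + |11⟩)/√2 and any rank-one product projector C = |a⟩⟨a| ⊗ |b⟩⟨b|, if ⟨φ|C|φ⟩ ≠ 0 then the Lüders conditional probabilities in |φ⟩ satisfy the screening-off condition P(A,B|C) = P(A|C)P(B|C) for all local observables A = A₀⊗I, B = I⊗B₀, even though |φ⟩ itself exhibits correlations violating the CHSH inequality. -/

import Mathlib

open Matrix Kronecker

def proj {n : Type*} [Fintype n] (v : n → ℂ) : Matrix n n ℂ :=
  Matrix.of fun i j => v i * star (v j)

lemma proj_sandwich (a : Fin 2 → ℂ) (M : Matrix (Fin 2) (Fin 2) ℂ) :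
    proj a * M * proj a = (star a ⬝ᵥ M.mulVec a) • proj a := by
  ext i j
  simp [proj, Matrix.mul_apply, dotProduct, Matrix.mulVec, Fin.sum_univ_two]
  ring

noncomputable def mB0 : Matrix (Fin 2) (Fin 2) ℂ :=
  ((Real.sqrt 2 : ℝ) : ℂ)⁻¹ • !![1,1;1,-1]
noncomputable def mB1 : Matrix (Fin 2) (Fin 2) ℂ :=
  ((Real.sqrt 2 : ℝ) : ℂ)⁻¹ • !![1,-1;-1,-1]

lemma s2 : ((Real.sqrt 2 : ℝ) : ℂ) * ((Real.sqrt 2 : ℝ) : ℂ) = 2 := by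
  norm_cast
  rw [Real.mul_self_sqrt] <;> norm_num

lemma sinv : ((Real.sqrt 2 : ℝ) : ℂ)⁻¹ * ((Real.sqrt 2 : ℝ) : ℂ)⁻¹ = 2⁻¹ := by
  rw [← mul_inv, s2]

lemma mB0_sq : mB0 * mB0 = 1 := by
  ext i j
  fin_cases i <;> fin_cases j <;>
    simp [mB0, Matrix.mul_apply, Fin.sum_univ_two, Matrix.one_apply, Matrix.smul_apply] <;>
    rw [sinv] <;> norm_num

lemma mB1_sq : mB1 * mB1 = 1 := by
  ext i j
  fin_cases i <;> fin_cases j <;>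
    simp [mB1, Matrix.mul_apply, Fin.sum_univ_two, Matrix.one_apply, Matrix.smul_apply] <;>
    rw [sinv] <;> norm_num

lemma mB0_herm : mB0.IsHermitian := by
  ext i j
  fin_cases i <;> fin_cases j <;>
    simp [mB0, Matrix.conjTranspose_apply, Matrix.smul_apply]

lemma mB1_herm : mB1.IsHermitian := by
  ext i j
  fin_cases i <;> fin_cases j <;>
    simp [mB1, Matrix.conjTranspose_apply, Matrix.smul_apply]

/-- For the Bell state |φ⟩ = (|00⟩+|11⟩)/√2 and any rank-one
product projector C = |a⟩⟨a| ⊗ |b⟩⟨b| with ⟨φ|C|φ⟩ ≠ 0, the Lüders conditional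
probabilities in |φ⟩ screen off: P(A,B|C) = P(A|C)·P(B|C) for all local
observables A = A₀⊗I, B = I⊗B₀ — even though |φ⟩ exhibits CHSH-violating
correlations. -/
theorem stmt12
    (φ : Fin 2 × Fin 2 → ℂ)
    (hφ : φ = fun p => if p.1 = p.2 then ((Real.sqrt 2 : ℝ)⁻¹ : ℂ) else 0)
    (a b : Fin 2 → ℂ)
    (ha : ∑ i, star (a i) * a i = 1) (hb : ∑ j, star (b j) * b j = 1)
    (C : Matrix (Fin 2 × Fin 2) (Fin 2 × Fin 2) ℂ)
    (hC : C = proj a ⊗ₖ proj b)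
    (hne : star φ ⬝ᵥ C.mulVec φ ≠ 0) :
    (∀ (A₀ B₀ : Matrix (Fin 2) (Fin 2) ℂ)
        (A B : Matrix (Fin 2 × Fin 2) (Fin 2 × Fin 2) ℂ),
        A = A₀ ⊗ₖ (1 : Matrix (Fin 2) (Fin 2) ℂ) →
        B = (1 : Matrix (Fin 2) (Fin 2) ℂ) ⊗ₖ B₀ →
        (star φ ⬝ᵥ (C * A * B * C).mulVec φ) / (star φ ⬝ᵥ C.mulVec φ) =
          ((star φ ⬝ᵥ (C * A * C).mulVec φ) / (star φ ⬝ᵥ C.mulVec φ)) *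
            ((star φ ⬝ᵥ (C * B * C).mulVec φ) / (star φ ⬝ᵥ C.mulVec φ))) ∧
    (∃ A₀ A₁ B₀ B₁ : Matrix (Fin 2) (Fin 2) ℂ,
        A₀.IsHermitian ∧ A₁.IsHermitian ∧ B₀.IsHermitian ∧ B₁.IsHermitian ∧
        A₀ * A₀ = 1 ∧ A₁ * A₁ = 1 ∧ B₀ * B₀ = 1 ∧ B₁ * B₁ = 1 ∧
        ‖star φ ⬝ᵥ
            ((A₀ ⊗ₖ B₀ + A₀ ⊗ₖ B₁ + A₁ ⊗ₖ B₀ - A₁ ⊗ₖ B₁).mulVec φ)‖ =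
          2 * Real.sqrt 2 ∧ (2 : ℝ) * Real.sqrt 2 > 2) := by
  constructor
  · intro A₀ B₀ A B hA hB
    have haa : star a ⬝ᵥ (1 : Matrix (Fin 2) (Fin 2) ℂ).mulVec a = 1 := by
      simpa [dotProduct, Matrix.mulVec_one] using ha
    have hbb : star b ⬝ᵥ (1 : Matrix (Fin 2) (Fin 2) ℂ).mulVec b = 1 := by
      simpa [dotProduct, Matrix.mulVec_one] using hb
    set α := star a ⬝ᵥ A₀.mulVec a with hα
    set β := star b ⬝ᵥ B₀.mulVec b with hβ
    have hCAC : C * A * C = α • C := by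
      simp only [hC, hA, ← Matrix.mul_kronecker_mul]
      rw [proj_sandwich, proj_sandwich, hbb, one_smul, Matrix.smul_kronecker]
    have hCBC : C * B * C = β • C := by
      simp only [hC, hB, ← Matrix.mul_kronecker_mul]
      rw [proj_sandwich, proj_sandwich, haa, one_smul, Matrix.kronecker_smul]
    have hCABC : C * A * B * C = (α * β) • C := by
      simp only [hC, hA, hB, ← Matrix.mul_kronecker_mul, Matrix.mul_one, Matrix.one_mul]
      rw [proj_sandwich, proj_sandwich, Matrix.smul_kronecker, Matrix.kronecker_smul,
        smul_smul]
    rw [hCAC, hCBC, hCABC, Matrix.smul_mulVec, Matrix.smul_mulVec,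
      Matrix.smul_mulVec, dotProduct_smul, dotProduct_smul, dotProduct_smul]
    field_simp
    simp only [smul_eq_mul]; ring
  · refine ⟨!![1,0;0,-1], !![0,1;1,0], mB0, mB1, ?_, ?_, mB0_herm, mB1_herm,
      ?_, ?_, mB0_sq, mB1_sq, ?_, ?_⟩
    · ext i j
      fin_cases i <;> fin_cases j <;> simp [Matrix.conjTranspose_apply]
    · ext i j
      fin_cases i <;> fin_cases j <;> simp [Matrix.conjTranspose_apply]
    · ext i j
      fin_cases i <;> fin_cases j <;>
        simp [Matrix.mul_apply, Fin.sum_univ_two, Matrix.one_apply]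
    · ext i j
      fin_cases i <;> fin_cases j <;>
        simp [Matrix.mul_apply, Fin.sum_univ_two, Matrix.one_apply]
    · have hval : star φ ⬝ᵥ
          ((!![1,0;0,-1] ⊗ₖ mB0 + !![1,0;0,-1] ⊗ₖ mB1 + !![0,1;1,0] ⊗ₖ mB0
            - !![0,1;1,0] ⊗ₖ mB1).mulVec φ) = ((2 * Real.sqrt 2 : ℝ) : ℂ) := by
        subst hφ
        simp [mB0, mB1, dotProduct, Matrix.mulVec, Fintype.sum_prod_type,
          Fin.sum_univ_two, Matrix.kroneckerMap_apply, Matrix.add_apply,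
          Matrix.sub_apply, Matrix.smul_apply]
        field_simp
        ring_nf
        linear_combination (-2*((Real.sqrt 2:ℝ):ℂ)*((Real.sqrt 2:ℝ):ℂ) - 4)*s2
      rw [hval, Complex.norm_real, Real.norm_of_nonneg (by positivity)]
    · have h1 : (1:ℝ) < Real.sqrt 2 := by
        nlinarith [Real.sq_sqrt (by norm_num : (2:ℝ) ≥ 0), Real.sqrt_nonneg 2]
      linarith
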